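/- In the rank-one perturbation setting, assume γ ≠ 0. Then for Lebesgue-almost every x ∈ ℝ the density of the absolutely continuous part of μ_γ is d(μ_γ)_ac/dx (x) = (1/π) lim_{y→0+} Im F(x+iy) / |1 + γ F(x+iy)|². -/

import Mathlib

open MeasureTheory Filter Set Complex
open scoped ENNReal Topology InnerProductSpace

variable {H : Type*} [NormedAddCommGroup H] [InnerProductSpace ℂ H] [CompleteSpace H]

/-- The rank-one perturbation `A_γ = A + γ (·,φ)φ` of a (possibly unbounded) operator `A`. -/
noncomputable def rankOnePert (A : H →ₗ.[ℂ] H) (φ : H) (γ : ℝ) : H →ₗ.[ℂ] H :=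
  ⟨A.domain, A.toFun + (γ : ℂ) •
    ((((innerSL ℂ φ).smulRight φ : H →L[ℂ] H) : H →ₗ[ℂ] H).comp A.domain.subtype)⟩

/-- The Borel transform `F(z) = ∫ dμ(t) / (t - z)` of a measure `μ` on `ℝ`. -/
noncomputable def borelTransform (μ : Measure ℝ) (z : ℂ) : ℂ :=
  ∫ t : ℝ, ((t : ℂ) - z)⁻¹ ∂μ

/-! ### Auxiliary lemmas on the Poisson kernel -/

section Poisson

lemma poisson_levelset_eq {x y s : ℝ} (hy : 0 < y) (hs : 0 < s) (hs' : s ≤ 1 / y) :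
    {t : ℝ | s ≤ y / ((t - x) ^ 2 + y ^ 2)} =
      Metric.closedBall x (Real.sqrt (y / s - y ^ 2)) := by
  have hc : 0 ≤ y / s - y ^ 2 := by
    have h1 : s * y ≤ 1 := (le_div_iff₀ hy).mp hs'
    rw [sub_nonneg, le_div_iff₀ hs]
    nlinarith [h1, hy.le, hs.le]
  ext t
  have hd : (0:ℝ) < (t - x) ^ 2 + y ^ 2 := by positivity
  simp only [mem_setOf_eq, Metric.mem_closedBall, Real.dist_eq]
  constructor
  · intro h
    have h0 : s * ((t - x) ^ 2 + y ^ 2) ≤ y := (le_div_iff₀ hd).mp h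
    have h1 : (t - x) ^ 2 + y ^ 2 ≤ y / s := (le_div_iff₀ hs).mpr (by linarith)
    have h2 : (t - x) ^ 2 ≤ y / s - y ^ 2 := by linarith
    calc |t - x| = Real.sqrt ((t - x) ^ 2) := (Real.sqrt_sq_eq_abs _).symm
      _ ≤ _ := Real.sqrt_le_sqrt h2
  · intro h
    have h3 : |t - x| ^ 2 ≤ Real.sqrt (y / s - y ^ 2) ^ 2 :=
      pow_le_pow_left₀ (abs_nonneg _) h 2
    rw [_root_.sq_abs, Real.sq_sqrt hc] at h3
    rw [le_div_iff₀ hd]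
    have h4 : ((t - x) ^ 2 + y ^ 2) * s ≤ y := (le_div_iff₀ hs).mp (by linarith)
    linarith [h4, mul_comm s ((t - x) ^ 2 + y ^ 2)]

lemma poisson_levelset_empty {x y s : ℝ} (hy : 0 < y) (hs' : 1 / y < s) :
    {t : ℝ | s ≤ y / ((t - x) ^ 2 + y ^ 2)} = ∅ := by
  have hs : 0 < s := lt_trans (by positivity) hs'
  ext t
  have hd : (0:ℝ) < (t - x) ^ 2 + y ^ 2 := by positivity
  simp only [mem_setOf_eq, mem_empty_iff_false, iff_false, not_le]
  rw [div_lt_iff₀ hd]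
  have h1 : 1 < s * y := by
    have := (div_lt_iff₀ hy).mp hs'
    linarith
  nlinarith [sq_nonneg (t - x), hy, hs]

lemma poisson_cont (x y : ℝ) (hy : 0 < y) :
    Continuous fun t : ℝ => y / ((t - x) ^ 2 + y ^ 2) := by
  apply continuous_const.div (by fun_prop)
  intro t
  positivity

lemma poisson_nonneg (x y : ℝ) (hy : 0 < y) (t : ℝ) :
    0 ≤ y / ((t - x) ^ 2 + y ^ 2) := by positivity

lemma poisson_integrable (ν : Measure ℝ) [IsFiniteMeasure ν] (x y : ℝ) (hy : 0 < y) :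
    Integrable (fun t : ℝ => y / ((t - x) ^ 2 + y ^ 2)) ν := by
  apply Integrable.mono' (integrable_const y⁻¹) (poisson_cont x y hy).aestronglyMeasurable
  refine Eventually.of_forall fun t => ?_
  have hd : (0:ℝ) < (t - x) ^ 2 + y ^ 2 := by positivity
  rw [Real.norm_eq_abs, _root_.abs_of_nonneg (poisson_nonneg x y hy t), inv_eq_one_div,
    div_le_div_iff₀ hd hy]
  nlinarith [sq_nonneg (t - x)]

lemma poisson_eq (x y : ℝ) (hy : 0 < y) :
    (fun t : ℝ => y / ((t - x) ^ 2 + y ^ 2)) =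
      fun t : ℝ => y⁻¹ * (1 + ((t - x) / y) ^ 2)⁻¹ := by
  funext t
  have hd : (0:ℝ) < (t - x) ^ 2 + y ^ 2 := by positivity
  rw [div_pow]
  field_simp
  ring

lemma poisson_lebesgue_integrable (x y : ℝ) (hy : 0 < y) :
    Integrable (fun t : ℝ => y / ((t - x) ^ 2 + y ^ 2)) (volume : Measure ℝ) := by
  rw [poisson_eq x y hy]
  exact ((integrable_inv_one_add_sq.comp_div hy.ne').comp_sub_right x).const_mul _

lemma poisson_lebesgue_integral (x y : ℝ) (hy : 0 < y) :
    ∫ t : ℝ, y / ((t - x) ^ 2 + y ^ 2) = Real.pi := by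
  rw [poisson_eq x y hy]
  rw [MeasureTheory.integral_const_mul]
  rw [show (fun t : ℝ => (1 + ((t - x) / y) ^ 2)⁻¹)
      = fun t : ℝ => (fun u : ℝ => (1 + (u / y) ^ 2)⁻¹) (t - x) from rfl]
  rw [integral_sub_right_eq_self (fun u : ℝ => (1 + (u / y) ^ 2)⁻¹) x]
  rw [MeasureTheory.Measure.integral_comp_div (fun u : ℝ => (1 + u ^ 2)⁻¹) y]
  rw [integral_univ_inv_one_add_sq, smul_eq_mul, abs_of_pos hy]
  field_simp

end Poisson

/-! ### The key quantitative estimate -/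

section KeyEstimate

lemma rpow_half_integrableOn (c : ℝ) (hc : 0 ≤ c) :
    IntegrableOn (fun s : ℝ => s ^ (-(1/2) : ℝ)) (Ioc 0 c) volume := by
  have := intervalIntegral.intervalIntegrable_rpow' (show (-1:ℝ) < -(1/2) by norm_num)
    (a := 0) (b := c)
  rwa [intervalIntegrable_iff_integrableOn_Ioc_of_le hc] at this

lemma rpow_half_integral (c : ℝ) (hc : 0 ≤ c) :
    ∫ s in (0:ℝ)..c, s ^ (-(1/2) : ℝ) = 2 * Real.sqrt c := by
  rw [integral_rpow (Or.inl (by norm_num))]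
  rw [Real.zero_rpow (by norm_num)]
  rw [show (-(1/2) : ℝ) + 1 = 1/2 by norm_num, Real.sqrt_eq_rpow]
  ring

set_option maxHeartbeats 1000000 in
lemma key_estimate (ν : Measure ℝ) [IsFiniteMeasure ν] (x L ε δ : ℝ) (hL : 0 ≤ L)
    (hε : 0 < ε) (hδ : 0 < δ)
    (hball : ∀ r, 0 < r → r ≤ δ →
      |(ν (Metric.closedBall x r)).toReal - 2 * r * L| ≤ ε * r)
    {y : ℝ} (hy : 0 < y) (hyδ : y < δ) :
    |(∫ t, y / ((t - x) ^ 2 + y ^ 2) ∂ν) - Real.pi * L|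
      ≤ (ν univ).toReal * (y / δ ^ 2) + 4 * L * y / δ + ε * Real.pi / 2 := by
  set M := (ν univ).toReal with hM
  have hMnn : 0 ≤ M := ENNReal.toReal_nonneg
  set f : ℝ → ℝ := fun t => y / ((t - x) ^ 2 + y ^ 2) with hfdef
  set Gf : ℝ → ℝ := fun s => (ν {a | s ≤ f a}).toReal with hGdef
  set Hf : ℝ → ℝ := fun s => ((volume : Measure ℝ) {a | s ≤ f a}).toReal with hHdef
  have hfnn : ∀ t, 0 ≤ f t := poisson_nonneg x y hy
  have E1 : ∫ t, f t ∂ν = ∫ s in Ioi (0:ℝ), Gf s :=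
    (poisson_integrable ν x y hy).integral_eq_integral_meas_le (Eventually.of_forall hfnn)
  have E2 : ∫ s in Ioi (0:ℝ), Hf s = Real.pi := by
    rw [← poisson_lebesgue_integral x y hy, (poisson_lebesgue_integrable x y hy).integral_eq_integral_meas_le
      (Eventually.of_forall hfnn)]
    rfl
  -- measurability
  have hantG : Antitone (fun s : ℝ => ν {a : ℝ | s ≤ f a}) :=
    fun s s' hss' => measure_mono fun a ha => le_trans hss' ha
  have hantH : Antitone (fun s : ℝ => (volume : Measure ℝ) {a : ℝ | s ≤ f a}) :=
    fun s s' hss' => measure_mono fun a ha => le_trans hss' ha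
  have mG : Measurable Gf := hantG.measurable.ennreal_toReal
  have mH : Measurable Hf := hantH.measurable.ennreal_toReal
  have hIy : (0:ℝ) < 1 / y := by positivity
  -- values of Hf and Gf
  have hHval : ∀ s, 0 < s → s ≤ 1 / y → Hf s = 2 * Real.sqrt (y / s - y ^ 2) := by
    intro s hs hs'
    rw [hHdef]
    simp only
    rw [poisson_levelset_eq hy hs hs', Real.volume_closedBall,
      ENNReal.toReal_ofReal (by positivity)]
  have hH0 : ∀ s, 1 / y < s → Hf s = 0 := by
    intro s hs'
    rw [hHdef]; simp only
    rw [poisson_levelset_empty hy hs']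
    simp
  have hG0 : ∀ s, 1 / y < s → Gf s = 0 := by
    intro s hs'
    rw [hGdef]; simp only
    rw [poisson_levelset_empty hy hs']
    simp
  have hGM : ∀ s, Gf s ≤ M :=
    fun s => ENNReal.toReal_mono (measure_ne_top ν univ) (measure_mono (subset_univ _))
  have hGnn : ∀ s, 0 ≤ Gf s := fun s => ENNReal.toReal_nonneg
  have hHnn : ∀ s, 0 ≤ Hf s := fun s => ENNReal.toReal_nonneg
  have hHb : ∀ s, 0 < s → Hf s ≤ 2 * Real.sqrt y * s ^ (-(1/2) : ℝ) := by
    intro s hs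
    rcases le_or_gt s (1 / y) with h | h
    · rw [hHval s hs h]
      have h1 : Real.sqrt (y / s - y ^ 2) ≤ Real.sqrt (y / s) :=
        Real.sqrt_le_sqrt (by nlinarith [sq_nonneg y])
      have h2 : Real.sqrt (y / s) = Real.sqrt y * s ^ (-(1/2) : ℝ) := by
        rw [Real.sqrt_div hy.le, Real.rpow_neg hs.le, ← Real.sqrt_eq_rpow, div_eq_mul_inv]
      nlinarith [h1, h2]
    · rw [hH0 s h]
      positivity
  -- integrability of Gf, Hf on Ioi 0
  have intG : Integrable Gf ((volume : Measure ℝ).restrict (Ioi 0)) := by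
    apply Integrable.mono' (g := indicator (Ioc 0 (1/y)) (fun _ => M))
      (((integrableOn_const measure_Ioc_lt_top.ne).integrable_indicator measurableSet_Ioc).restrict)
      mG.aestronglyMeasurable
    rw [ae_restrict_iff' measurableSet_Ioi]
    refine Eventually.of_forall fun s hs => ?_
    rw [Real.norm_eq_abs, _root_.abs_of_nonneg (hGnn s)]
    rcases le_or_gt s (1/y) with h | h
    · rw [indicator_of_mem (show s ∈ Ioc 0 (1/y) from ⟨hs, h⟩)]
      exact hGM s
    · rw [indicator_of_notMem (fun hc => absurd hc.2 (not_le.mpr h)), hG0 s h]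
  have intH : Integrable Hf ((volume : Measure ℝ).restrict (Ioi 0)) := by
    apply Integrable.mono'
      (g := indicator (Ioc 0 (1/y)) (fun s => 2 * Real.sqrt y * s ^ (-(1/2) : ℝ)))
      (((show IntegrableOn (fun s : ℝ => 2 * Real.sqrt y * s ^ (-(1/2) : ℝ)) (Ioc 0 (1/y)) volume
        from (rpow_half_integrableOn (1/y) hIy.le).const_mul
        (2 * Real.sqrt y)).integrable_indicator measurableSet_Ioc).restrict)
      mH.aestronglyMeasurable
    rw [ae_restrict_iff' measurableSet_Ioi]
    refine Eventually.of_forall fun s hs => ?_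
    rw [Real.norm_eq_abs, _root_.abs_of_nonneg (hHnn s)]
    rcases le_or_gt s (1/y) with h | h
    · rw [indicator_of_mem (show s ∈ Ioc 0 (1/y) from ⟨hs, h⟩)]
      exact hHb s hs
    · rw [indicator_of_notMem (fun hc => absurd hc.2 (not_le.mpr h)), hH0 s h]
  -- the comparison function
  set a := y / δ ^ 2 with hadef
  have ha0 : 0 < a := by positivity
  have haIy : a < 1 / y := by
    rw [hadef, div_lt_div_iff₀ (by positivity) hy]
    nlinarith
  set c := 2 * L * Real.sqrt y with hcdef
  have hcnn : 0 ≤ c := by positivity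
  set B : ℝ → ℝ := fun s =>
    indicator (Ioc 0 a) (fun s => M + c * s ^ (-(1/2) : ℝ)) s + (ε / 2) * Hf s with hBdef
  have intInd : Integrable (indicator (Ioc 0 a) (fun s : ℝ => M + c * s ^ (-(1/2) : ℝ)))
      ((volume : Measure ℝ).restrict (Ioi 0)) := by
    apply Integrable.restrict
    apply IntegrableOn.integrable_indicator _ measurableSet_Ioc
    exact (integrableOn_const measure_Ioc_lt_top.ne).add
      ((rpow_half_integrableOn a ha0.le).const_mul c)
  have intB : Integrable B ((volume : Measure ℝ).restrict (Ioi 0)) :=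
    intInd.add (intH.const_mul _)
  -- pointwise a.e. bound
  have hae : ∀ᵐ s ∂((volume : Measure ℝ).restrict (Ioi 0)), |Gf s - L * Hf s| ≤ B s := by
    have hsing : ∀ᵐ s ∂(volume : Measure ℝ), s ≠ 1 / y := by
      rw [ae_iff]
      have : {s : ℝ | ¬s ≠ 1 / y} = {1 / y} := by ext s; simp
      rw [this]
      exact Real.volume_singleton
    rw [ae_restrict_iff' measurableSet_Ioi]
    filter_upwards [hsing] with s hne hs
    rw [mem_Ioi] at hs
    have htri : |Gf s - L * Hf s| ≤ Gf s + L * Hf s := by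
      rw [abs_sub_le_iff]
      constructor <;> nlinarith [hGnn s, hHnn s, mul_nonneg hL (hHnn s)]
    rcases le_or_gt s a with hcase | hcase
    · have hind : indicator (Ioc 0 a) (fun s => M + c * s ^ (-(1/2) : ℝ)) s
          = M + c * s ^ (-(1/2) : ℝ) := indicator_of_mem (show s ∈ Ioc 0 a from ⟨hs, hcase⟩) _
      rw [hBdef]
      simp only
      rw [hind]
      have h3 : L * Hf s ≤ c * s ^ (-(1/2) : ℝ) := by
        have := mul_le_mul_of_nonneg_left (hHb s hs) hL
        rw [hcdef]
        nlinarith [this]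
      have h4 : 0 ≤ (ε / 2) * Hf s := mul_nonneg (by linarith) (hHnn s)
      linarith [htri, hGM s, h3, h4]
    · have hind0 : indicator (Ioc 0 a) (fun s => M + c * s ^ (-(1/2) : ℝ)) s = 0 :=
        indicator_of_notMem (fun hc' => absurd hc'.2 (not_le.mpr hcase)) _
      rw [hBdef]
      simp only
      rw [hind0, zero_add]
      rcases lt_trichotomy s (1 / y) with h | h | h
      · set r := Real.sqrt (y / s - y ^ 2) with hrdef
        have hyslt : y ^ 2 < y / s := by
          rw [lt_div_iff₀ hs]
          have : s * y < 1 := (lt_div_iff₀ hy).mp h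
          nlinarith
        have hrpos : 0 < r := Real.sqrt_pos.mpr (by linarith)
        have hrδ : r ≤ δ := by
          have hya : y / s ≤ y / a := div_le_div_of_nonneg_left hy.le ha0 hcase.le
          have hya' : y / a = δ ^ 2 := by
            rw [hadef]
            field_simp
          have hc2 : y / s - y ^ 2 ≤ δ ^ 2 := by nlinarith [sq_nonneg y]
          calc r ≤ Real.sqrt (δ ^ 2) := Real.sqrt_le_sqrt hc2
            _ = δ := Real.sqrt_sq hδ.le
        have hGv : Gf s = (ν (Metric.closedBall x r)).toReal := by
          rw [hGdef]
          simp only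
          rw [poisson_levelset_eq hy hs h.le]
        have hHv : Hf s = 2 * r := hHval s hs h.le
        have hb := hball r hrpos hrδ
        rw [hGv, hHv]
        calc |(ν (Metric.closedBall x r)).toReal - L * (2 * r)|
            = |(ν (Metric.closedBall x r)).toReal - 2 * r * L| := by ring_nf
          _ ≤ ε * r := hb
          _ = (ε / 2) * (2 * r) := by ring
      · exact absurd h hne
      · rw [hG0 s h, hH0 s h]
        simp
  -- put everything together
  have habs : |(∫ t, f t ∂ν) - Real.pi * L| ≤ ∫ s in Ioi (0:ℝ), B s := by
    rw [E1, ← E2]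
    have heq : (∫ s in Ioi (0:ℝ), Gf s) - (∫ s in Ioi (0:ℝ), Hf s) * L
        = ∫ s in Ioi (0:ℝ), (Gf s - L * Hf s) := by
      rw [integral_sub intG (intH.const_mul L), MeasureTheory.integral_const_mul]
      ring
    calc |(∫ s in Ioi (0:ℝ), Gf s) - (∫ s in Ioi (0:ℝ), Hf s) * L|
        = |∫ s in Ioi (0:ℝ), (Gf s - L * Hf s)| := by rw [heq]
      _ ≤ ∫ s in Ioi (0:ℝ), |Gf s - L * Hf s| := by
          simpa [Real.norm_eq_abs] using
            norm_integral_le_integral_norm (μ := (volume : Measure ℝ).restrict (Ioi 0))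
              (fun s => Gf s - L * Hf s)
      _ ≤ ∫ s in Ioi (0:ℝ), B s :=
          integral_mono_ae ((intG.sub (intH.const_mul L)).abs) intB hae
  have hBval : ∫ s in Ioi (0:ℝ), B s ≤ M * (y / δ ^ 2) + 4 * L * y / δ + ε * Real.pi / 2 := by
    have i1 : ∫ s in Ioi (0:ℝ), indicator (Ioc 0 a) (fun s => M + c * s ^ (-(1/2) : ℝ)) s
        = M * a + c * (2 * Real.sqrt a) := by
      rw [integral_indicator measurableSet_Ioc,
        Measure.restrict_restrict measurableSet_Ioc,
        inter_eq_self_of_subset_left Ioc_subset_Ioi_self,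
        ← intervalIntegral.integral_of_le ha0.le]
      rw [intervalIntegral.integral_add intervalIntegrable_const
        ((intervalIntegral.intervalIntegrable_rpow'
          (show (-1:ℝ) < -(1/2) by norm_num)).const_mul c)]
      rw [intervalIntegral.integral_const, intervalIntegral.integral_const_mul,
        rpow_half_integral a ha0.le]
      rw [smul_eq_mul, sub_zero]
      ring
    have i2 : ∫ s in Ioi (0:ℝ), (ε / 2) * Hf s = (ε / 2) * Real.pi := by
      rw [MeasureTheory.integral_const_mul, E2]
    rw [hBdef]
    rw [integral_add intInd (intH.const_mul _), i1, i2]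
    have hsqa : Real.sqrt a = Real.sqrt y / δ := by
      rw [hadef, Real.sqrt_div hy.le, Real.sqrt_sq hδ.le]
    have hyy : Real.sqrt y * Real.sqrt y = y := Real.mul_self_sqrt hy.le
    have hkey : c * (2 * Real.sqrt a) = 4 * L * y / δ := by
      rw [hcdef, hsqa]
      have hδ' : δ ≠ 0 := hδ.ne'
      field_simp
      linear_combination (4 * L) * hyy
    rw [hkey]
    linarith
  calc |(∫ t, f t ∂ν) - Real.pi * L| ≤ ∫ s in Ioi (0:ℝ), B s := habs
    _ ≤ M * (y / δ ^ 2) + 4 * L * y / δ + ε * Real.pi / 2 := hBval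

end KeyEstimate


/-! ### Fatou-type theorem for Poisson integrals -/

section FatouPoisson

lemma poisson_tendsto (ν : Measure ℝ) [IsFiniteMeasure ν] (x L : ℝ) (hL : 0 ≤ L)
    (Hyp : ∀ ε, 0 < ε → ∃ δ, 0 < δ ∧ ∀ r, 0 < r → r ≤ δ →
      |(ν (Metric.closedBall x r)).toReal - 2 * r * L| ≤ ε * r) :
    Tendsto (fun y : ℝ => (Real.pi)⁻¹ * ∫ t, y / ((t - x) ^ 2 + y ^ 2) ∂ν)
      (𝓝[>] 0) (𝓝 L) := by
  have hπ : (0:ℝ) < Real.pi := Real.pi_pos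
  rw [Metric.tendsto_nhds]
  intro ε hε
  obtain ⟨δ, hδ, hball⟩ := Hyp (ε / 2) (by positivity)
  set M := (ν univ).toReal with hM
  have hMnn : (0:ℝ) ≤ M := ENNReal.toReal_nonneg
  have hcont : Tendsto (fun y : ℝ => Real.pi⁻¹ * (M * (y / δ ^ 2) + 4 * L * y / δ))
      (𝓝[>] (0:ℝ)) (𝓝 0) := by
    apply tendsto_nhdsWithin_of_tendsto_nhds
    have hc : Continuous (fun y : ℝ => Real.pi⁻¹ * (M * (y / δ ^ 2) + 4 * L * y / δ)) := by
      fun_prop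
    have h0 := hc.tendsto 0
    simpa using h0
  have hev : ∀ᶠ y in 𝓝[>] (0:ℝ),
      Real.pi⁻¹ * (M * (y / δ ^ 2) + 4 * L * y / δ) < ε / 4 :=
    hcont.eventually_lt_const (by positivity)
  filter_upwards [hev, Ioo_mem_nhdsGT hδ] with y h1 h2
  obtain ⟨hy0, hyδ⟩ := h2
  have hkey := key_estimate ν x L (ε / 2) δ hL (by positivity) hδ hball hy0 hyδ
  rw [Real.dist_eq]
  have h5 : Real.pi⁻¹ * (∫ t, y / ((t - x) ^ 2 + y ^ 2) ∂ν) - L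
      = Real.pi⁻¹ * ((∫ t, y / ((t - x) ^ 2 + y ^ 2) ∂ν) - Real.pi * L) := by
    field_simp
  rw [h5, abs_mul, _root_.abs_of_pos (show (0:ℝ) < Real.pi⁻¹ by positivity)]
  calc Real.pi⁻¹ * |(∫ t, y / ((t - x) ^ 2 + y ^ 2) ∂ν) - Real.pi * L|
      ≤ Real.pi⁻¹ * (M * (y / δ ^ 2) + 4 * L * y / δ + (ε / 2) * Real.pi / 2) :=
        mul_le_mul_of_nonneg_left hkey (by positivity)
    _ = Real.pi⁻¹ * (M * (y / δ ^ 2) + 4 * L * y / δ) + ε / 4 := by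
        field_simp
        ring
    _ < ε / 4 + ε / 4 := by linarith [h1]
    _ < ε := by linarith [hε]

lemma fatou_poisson (ν : Measure ℝ) [IsFiniteMeasure ν] :
    ∀ᵐ x ∂(volume : Measure ℝ),
      Tendsto (fun y : ℝ => (Real.pi)⁻¹ * ∫ t, y / ((t - x) ^ 2 + y ^ 2) ∂ν)
        (𝓝[>] 0) (𝓝 ((ν.rnDeriv volume x).toReal)) := by
  filter_upwards [Besicovitch.ae_tendsto_rnDeriv ν volume,
    ν.rnDeriv_lt_top volume] with x hx hx'
  set L := (ν.rnDeriv volume x).toReal with hL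
  have hLnn : 0 ≤ L := ENNReal.toReal_nonneg
  have h1 : Tendsto (fun r => ((ν (Metric.closedBall x r))
        / volume (Metric.closedBall x r)).toReal) (𝓝[>] 0) (𝓝 L) :=
    (ENNReal.tendsto_toReal hx'.ne).comp hx
  have h2 : Tendsto (fun r => (ν (Metric.closedBall x r)).toReal / (2 * r))
      (𝓝[>] (0:ℝ)) (𝓝 L) := by
    apply h1.congr'
    filter_upwards [self_mem_nhdsWithin] with r hr
    rw [mem_Ioi] at hr
    rw [Real.volume_closedBall, ENNReal.toReal_div,
      ENNReal.toReal_ofReal (by positivity)]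
  apply poisson_tendsto ν x L hLnn
  intro ε hε
  have h3 : ∀ᶠ r in 𝓝[>] (0:ℝ),
      dist ((ν (Metric.closedBall x r)).toReal / (2 * r)) L < ε / 2 :=
    Metric.tendsto_nhds.mp h2 (ε / 2) (by positivity)
  obtain ⟨u, hu, hsub⟩ := mem_nhdsGT_iff_exists_Ioc_subset.mp h3
  rw [mem_Ioi] at hu
  refine ⟨u, hu, fun r hr hru => ?_⟩
  have hd := hsub ⟨hr, hru⟩
  rw [mem_setOf_eq, Real.dist_eq] at hd
  have h2r : (0:ℝ) < 2 * r := by linarith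
  have heq2 : (ν (Metric.closedBall x r)).toReal - 2 * r * L
      = (2 * r) * ((ν (Metric.closedBall x r)).toReal / (2 * r) - L) := by
    field_simp
  rw [heq2, abs_mul, _root_.abs_of_pos h2r]
  calc (2 * r) * |(ν (Metric.closedBall x r)).toReal / (2 * r) - L|
      ≤ (2 * r) * (ε / 2) := mul_le_mul_of_nonneg_left hd.le h2r.le
    _ = ε * r := by ring

end FatouPoisson

/-! ### The Borel transform and its imaginary part -/

section BorelTransform

lemma borel_integrand_integrable (ν : Measure ℝ) [IsFiniteMeasure ν] {z : ℂ}
    (hz : z.im ≠ 0) : Integrable (fun t : ℝ => ((t : ℂ) - z)⁻¹) ν := by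
  have hne : ∀ t : ℝ, ((t : ℂ) - z) ≠ 0 := by
    intro t h
    apply hz
    have := congrArg Complex.im h
    simpa using this.symm
  have hcont : Continuous fun t : ℝ => ((t : ℂ) - z)⁻¹ :=
    (Complex.continuous_ofReal.sub continuous_const).inv₀ hne
  apply Integrable.mono' (integrable_const |z.im|⁻¹) hcont.aestronglyMeasurable
  refine Eventually.of_forall fun t => ?_
  rw [norm_inv]
  apply inv_anti₀ (abs_pos.mpr hz)
  calc |z.im| = |((t : ℂ) - z).im| := by simp
    _ ≤ ‖(t : ℂ) - z‖ := Complex.abs_im_le_norm _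
    _ = ‖(t : ℂ) - z‖ := rfl

lemma borel_im (ν : Measure ℝ) [IsFiniteMeasure ν] (x y : ℝ) (hy : 0 < y) :
    (borelTransform ν ((x : ℂ) + y * Complex.I)).im
      = ∫ t, y / ((t - x) ^ 2 + y ^ 2) ∂ν := by
  set z : ℂ := (x : ℂ) + y * Complex.I with hzdef
  have hzim : z.im = y := by simp [hzdef]
  have hz : z.im ≠ 0 := by rw [hzim]; exact hy.ne'
  have hint := Complex.imCLM.integral_comp_comm (borel_integrand_integrable ν hz)
  simp only [Complex.imCLM_apply] at hint
  rw [borelTransform, ← hint]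
  apply integral_congr_ae
  refine Eventually.of_forall fun t => ?_
  have h1 : ((t : ℂ) - z).im = -y := by simp [hzdef]
  have h2 : ((t : ℂ) - z).re = t - x := by simp [hzdef]
  show (((t : ℂ) - z)⁻¹).im = y / ((t - x) ^ 2 + y ^ 2)
  rw [Complex.inv_im, Complex.normSq_apply, h1, h2]
  rw [neg_neg]
  congr 1
  ring

end BorelTransform

theorem ac_density_formula
    [TopologicalSpace.SeparableSpace H]
    (A : H →ₗ.[ℂ] H) (hA : IsSelfAdjoint A)
    (φ : H) (hφ : ‖φ‖ = 1)
    (R : ℝ → ℂ → H →L[ℂ] H)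
    (hR1 : ∀ (γ : ℝ) (z : ℂ), z.im ≠ 0 → ∀ x : H,
      ∃ h : R γ z x ∈ (rankOnePert A φ γ).domain,
        (rankOnePert A φ γ) ⟨R γ z x, h⟩ - z • R γ z x = x)
    (hR2 : ∀ (γ : ℝ) (z : ℂ), z.im ≠ 0 → ∀ y (hy : y ∈ (rankOnePert A φ γ).domain),
      R γ z ((rankOnePert A φ γ) ⟨y, hy⟩ - z • y) = y)
    (hcyc : (Submodule.span ℂ {x : H | ∃ z : ℂ, z.im ≠ 0 ∧ x = R 0 z φ}).topologicalClosure = ⊤)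
    (μ : ℝ → Measure ℝ) (hfin : ∀ γ, IsFiniteMeasure (μ γ))
    (hμ : ∀ (γ : ℝ) (z : ℂ), z.im ≠ 0 → ⟪φ, R γ z φ⟫_ℂ = borelTransform (μ γ) z)
    (γ : ℝ) (hγ : γ ≠ 0) :
    ∀ᵐ (x : ℝ) ∂(volume : Measure ℝ),
      Tendsto (fun y : ℝ => (Real.pi)⁻¹ *
          ((borelTransform (μ 0) ((x : ℂ) + y * Complex.I)).im /
            ‖1 + γ * borelTransform (μ 0) ((x : ℂ) + y * Complex.I)‖ ^ 2))
        (𝓝[>] 0) (𝓝 (((μ γ).rnDeriv volume x).toReal)) := by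
  haveI : IsFiniteMeasure (μ γ) := hfin γ
  haveI : IsFiniteMeasure (μ 0) := hfin 0
  -- the Aronszajn–Krein formula `F_γ = F / (1 + γ F)`
  have hAK : ∀ z : ℂ, z.im ≠ 0 →
      (1 + (γ : ℂ) * borelTransform (μ 0) z) ≠ 0 ∧
      borelTransform (μ γ) z
        = borelTransform (μ 0) z / (1 + (γ : ℂ) * borelTransform (μ 0) z) := by
    intro z hz
    obtain ⟨hmem, hv⟩ := hR1 γ z hz φ
    have happ : (rankOnePert A φ γ) ⟨R γ z φ, hmem⟩
        = A.toFun ⟨R γ z φ, hmem⟩ + ((γ : ℝ) : ℂ) • (⟪φ, R γ z φ⟫_ℂ • φ) := rfl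
    have h0 : (rankOnePert A φ 0) ⟨R γ z φ, hmem⟩ = A.toFun ⟨R γ z φ, hmem⟩ := by
      show A.toFun ⟨R γ z φ, hmem⟩ + ((0 : ℝ) : ℂ) • (⟪φ, R γ z φ⟫_ℂ • φ)
          = A.toFun ⟨R γ z φ, hmem⟩
      simp
    have key := hR2 0 z hz (R γ z φ) hmem
    rw [h0] at key
    have hAv : A.toFun ⟨R γ z φ, hmem⟩ - z • R γ z φ
        = ((1 : ℂ) - (γ : ℂ) * ⟪φ, R γ z φ⟫_ℂ) • φ := by
      rw [happ] at hv
      have h2' : (A.toFun ⟨R γ z φ, hmem⟩ - z • R γ z φ)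
          + ((γ : ℝ) : ℂ) • (⟪φ, R γ z φ⟫_ℂ • φ) = φ := by
        calc (A.toFun ⟨R γ z φ, hmem⟩ - z • R γ z φ)
            + ((γ : ℝ) : ℂ) • (⟪φ, R γ z φ⟫_ℂ • φ)
            = A.toFun ⟨R γ z φ, hmem⟩ + ((γ : ℝ) : ℂ) • (⟪φ, R γ z φ⟫_ℂ • φ)
              - z • R γ z φ := by abel
          _ = φ := hv
      have h2 := eq_sub_of_add_eq h2'
      rw [h2, sub_smul, one_smul, smul_smul]
    have hveq : R γ z φ = ((1 : ℂ) - (γ : ℂ) * ⟪φ, R γ z φ⟫_ℂ) • R 0 z φ := by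
      conv_lhs => rw [← key]
      rw [hAv, ContinuousLinearMap.map_smul]
    have hinner := congrArg (fun w => ⟪φ, w⟫_ℂ) hveq
    simp only [inner_smul_right] at hinner
    rw [hμ γ z hz, hμ 0 z hz] at hinner
    set F := borelTransform (μ 0) z
    set Fγ := borelTransform (μ γ) z
    have hprod : Fγ * (1 + (γ : ℂ) * F) = F := by linear_combination hinner
    have hne : (1 + (γ : ℂ) * F) ≠ 0 := by
      intro h
      have hF0 : F = 0 := by rw [← hprod, h, mul_zero]
      rw [hF0, mul_zero, add_zero] at h
      exact one_ne_zero h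
    exact ⟨hne, (eq_div_iff hne).mpr hprod⟩
  filter_upwards [fatou_poisson (μ γ)] with x hx
  apply Tendsto.congr' _ hx
  filter_upwards [self_mem_nhdsWithin] with y hy
  rw [mem_Ioi] at hy
  congr 1
  have hzim : ((x : ℂ) + y * Complex.I).im ≠ 0 := by simp [hy.ne']
  obtain ⟨hne, heq⟩ := hAK _ hzim
  rw [← borel_im (μ γ) x y hy, heq]
  set F := borelTransform (μ 0) ((x : ℂ) + y * Complex.I)
  rw [Complex.div_im]
  have h1 : ((1 : ℂ) + (γ : ℂ) * F).re = 1 + γ * F.re := by simp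
  have h2 : ((1 : ℂ) + (γ : ℂ) * F).im = γ * F.im := by simp
  have h3 : Complex.normSq (1 + (γ : ℂ) * F) ≠ 0 :=
    fun h => hne (Complex.normSq_eq_zero.mp h)
  rw [Complex.sq_norm, h1, h2]
  field_simp
  ring
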